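/- Let X be a Tychonoff (completely regular Hausdorff) space, let D ⊆ C_k(X) be an open convex set, let φ : D → ℝ be a convex continuous function, and let f ∈ D. Then φ is Schwartz–Fréchet differentiable at f (there exist a continuous linear functional ξ on C_k(X) and a neighborhood V of 0 in C_k(X) such that sup_{h∈V}(φ(f+th) − φ(f) − tξ(h)) = o(t) as t → 0) if and only if φ is Yamamuro–Fréchet differentiable at f (there exists a continuous linear functional ξ on C_k(X) such that for every von Neumann bounded set M ⊆ C_k(X), sup_{h∈M}(φ(f+th) − φ(f) − tξ(h)) = o(t) as t → 0). -/

import Mathlib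

open Filter Pointwise


lemma ck_nhds_basis {X : Type*} [TopologicalSpace X] :
    (nhds (0 : C(X, ℝ))).HasBasis (fun p : Set X × ℝ => IsCompact p.1 ∧ 0 < p.2)
      (fun p => {g : C(X, ℝ) | ∀ x ∈ p.1, |g x| < p.2}) := by
  have h := nhds_basis_uniformity'
    ((Metric.uniformity_basis_dist (α := ℝ)).compactConvergenceUniformity (α := X))
    (x := (0 : C(X, ℝ)))
  convert h using 2 with p
  ext g
  simp [UniformSpace.ball, Real.dist_eq, abs_sub_comm]

/-- A convex function on ℝ bounded above is constant (we only need g 1 = g 0). -/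
lemma convex_line_const {g : ℝ → ℝ}
    (hconv : ∀ s₁ s₂ a b : ℝ, 0 ≤ a → 0 ≤ b → a + b = 1 →
      g (a * s₁ + b * s₂) ≤ a * g s₁ + b * g s₂)
    {M : ℝ} (hM : ∀ s, g s ≤ M) : g 1 = g 0 := by
  have key : ∀ s : ℝ, g s ≤ g 0 := by
    intro s
    refine le_of_forall_pos_le_add fun ε hε => ?_
    rcases le_or_gt (M - g 0) 0 with hM0 | hM0
    · have := hconv 0 s 0 1 le_rfl zero_le_one (by ring)
      simp only [zero_mul, one_mul, zero_add] at this
      linarith [hM s]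
    · set t : ℝ := min 1 (ε / (M - g 0)) with ht
      have ht0 : 0 < t := lt_min one_pos (div_pos hε hM0)
      have ht1 : t ≤ 1 := min_le_left _ _
      have := hconv 0 (s / t) (1 - t) t (by linarith) ht0.le (by ring)
      have hst : (1 - t) * 0 + t * (s / t) = s := by field_simp; ring
      rw [hst] at this
      have h2 : t * (M - g 0) ≤ ε := by
        calc t * (M - g 0) ≤ (ε / (M - g 0)) * (M - g 0) :=
              mul_le_mul_of_nonneg_right (min_le_right _ _) hM0.le
          _ = ε := by field_simp
      calc g s ≤ (1 - t) * g 0 + t * g (s / t) := this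
        _ ≤ (1 - t) * g 0 + t * M := by nlinarith [hM (s / t)]
        _ = g 0 + t * (M - g 0) := by ring
        _ ≤ g 0 + ε := by linarith
  have h1 : g 1 ≤ g 0 := key 1
  have hm1 : g (-1) ≤ g 0 := key (-1)
  have := hconv 1 (-1) (1/2) (1/2) (by norm_num) (by norm_num) (by norm_num)
  have h0 : g 0 ≤ (1/2) * g 1 + (1/2) * g (-1) := by
    convert this using 2; norm_num
  linarith

/-- The uniform ball is von Neumann bounded in C_k(X). -/
lemma ball_isVonNBounded {X : Type*} [TopologicalSpace X] {c : ℝ} (hc : 0 < c) :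
    Bornology.IsVonNBounded ℝ {g : C(X, ℝ) | ∀ x, |g x| ≤ c} := by
  intro W hW
  obtain ⟨⟨K, ε⟩, ⟨hK, hε⟩, hsub⟩ := ck_nhds_basis.mem_iff.mp hW
  rw [absorbs_iff_norm]
  refine ⟨c / ε + 1, fun a ha => fun g hg => ?_⟩
  have ha0 : a ≠ 0 := by
    intro h; rw [h] at ha; simp at ha; nlinarith [div_nonneg hc.le hε.le]
  rw [Set.mem_smul_set_iff_inv_smul_mem₀ ha0]
  refine hsub fun x _ => ?_
  have h1 : |a⁻¹| * |g x| ≤ |a⁻¹| * c :=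
    mul_le_mul_of_nonneg_left (hg x) (abs_nonneg _)
  have hga : ‖a‖ > c / ε := by have : ‖a‖ ≥ c / ε + 1 := ha; linarith
  have hnorm : |a| = ‖a‖ := rfl
  have habs : 0 < |a| := abs_pos.mpr ha0
  have h2 : |a|⁻¹ * c < ε := by
    rw [inv_mul_lt_iff₀ habs, hnorm]
    calc c = (c / ε) * ε := by field_simp
      _ < ‖a‖ * ε := mul_lt_mul_of_pos_right hga hε
  calc |(a⁻¹ • g) x| = |a⁻¹| * |g x| := by simp [abs_mul]
    _ ≤ |a⁻¹| * c := h1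
    _ = |a|⁻¹ * c := by rw [abs_inv]
    _ < ε := h2

/-- A continuous linear functional on C_k(X) vanishes on functions vanishing
on a suitable compact set. -/
lemma xi_vanish {X : Type*} [TopologicalSpace X] (ξ : C(X, ℝ) →L[ℝ] ℝ) :
    ∃ K : Set X, IsCompact K ∧ ∀ g : C(X, ℝ), (∀ x ∈ K, g x = 0) → ξ g = 0 := by
  have hcont : Filter.Tendsto ξ (nhds 0) (nhds 0) := by
    have := ξ.continuous.tendsto (0 : C(X, ℝ))
    rwa [map_zero] at this
  have hW : (ξ ⁻¹' Metric.ball 0 1) ∈ nhds (0 : C(X, ℝ)) :=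
    hcont (Metric.ball_mem_nhds 0 one_pos)
  obtain ⟨⟨K, ε⟩, ⟨hK, hε⟩, hsub⟩ := ck_nhds_basis.mem_iff.mp hW
  refine ⟨K, hK, fun g hg => ?_⟩
  by_contra hne
  have habs : 0 < |ξ g| := abs_pos.mpr hne
  obtain ⟨n, hn⟩ := exists_nat_gt (1 / |ξ g|)
  have hmem : (n : ℝ) • g ∈ ξ ⁻¹' Metric.ball 0 1 := by
    refine hsub fun x hx => ?_
    simp [hg x hx, hε]
  have h1 : (n : ℝ) * |ξ g| < 1 := by
    simpa [Real.dist_eq, map_smul, smul_eq_mul, abs_mul, Nat.abs_cast] using hmem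
  rw [div_lt_iff₀ habs] at hn
  linarith

/-- For a Tychonoff space `X`, an open convex `D ⊆ C_k(X)`,
a convex continuous `φ : D → ℝ` and `f ∈ D`: `φ` is Schwartz–Fréchet differentiable
at `f` (there are a continuous linear functional `ξ` and a neighbourhood `V` of `0`
with `sup_{h∈V}(φ(f+th) − φ(f) − tξ(h)) = o(t)` as `t → 0`) if and only if `φ` is
Yamamuro–Fréchet differentiable at `f` (there is a continuous linear functional `ξ`
such that for every von Neumann bounded `M ⊆ C_k(X)`,
`sup_{h∈M}(φ(f+th) − φ(f) − tξ(h)) = o(t)` as `t → 0`). -/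
theorem stmt2 {X : Type*} [TopologicalSpace X] [T35Space X]
    (D : Set C(X, ℝ)) (hDopen : IsOpen D) (hDconv : Convex ℝ D)
    (φ : C(X, ℝ) → ℝ) (hφconv : ConvexOn ℝ D φ) (hφcont : ContinuousOn φ D)
    (f : C(X, ℝ)) (hf : f ∈ D) :
    (∃ ξ : C(X, ℝ) →L[ℝ] ℝ, ∃ V ∈ nhds (0 : C(X, ℝ)),
        ∀ ε > (0 : ℝ), ∃ δ > (0 : ℝ), ∀ t : ℝ, |t| < δ →
          ∀ h ∈ V, φ (f + t • h) - φ f - t * ξ h ≤ ε * |t|) ↔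
    (∃ ξ : C(X, ℝ) →L[ℝ] ℝ, ∀ M : Set C(X, ℝ), Bornology.IsVonNBounded ℝ M →
        ∀ ε > (0 : ℝ), ∃ δ > (0 : ℝ), ∀ t : ℝ, |t| < δ →
          ∀ h ∈ M, φ (f + t • h) - φ f - t * ξ h ≤ ε * |t|) := by
  constructor
  · rintro ⟨ξ, V, hV, hSch⟩
    refine ⟨ξ, fun M hM ε hε => ?_⟩
    obtain ⟨r, hr⟩ := absorbs_iff_norm.mp (hM hV)
    set a : ℝ := max r 1 with ha_def
    have ha1 : (1 : ℝ) ≤ a := le_max_right _ _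
    have ha0 : (0 : ℝ) < a := lt_of_lt_of_le one_pos ha1
    have hMa : M ⊆ a • V := hr a (by
      have : ‖a‖ = a := by rw [Real.norm_eq_abs, abs_of_pos ha0]
      rw [this]; exact le_max_left _ _)
    obtain ⟨δ, hδpos, hδ⟩ := hSch (ε / a) (div_pos hε ha0)
    refine ⟨δ / a, div_pos hδpos ha0, fun t ht h hh => ?_⟩
    obtain ⟨h', hh', rfl⟩ := hMa hh
    have hta : |t * a| < δ := by
      rw [abs_mul, abs_of_pos ha0]
      calc |t| * a < (δ / a) * a := mul_lt_mul_of_pos_right ht ha0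
        _ = δ := by field_simp
    have := hδ (t * a) hta h' hh'
    have hsm : (t * a) • h' = t • (a • h') := by rw [smul_smul]
    rw [hsm] at this
    have hxi : (t * a) * ξ h' = t * ξ (a • h') := by
      rw [map_smul, smul_eq_mul]; ring
    rw [hxi] at this
    calc φ (f + t • (a • h')) - φ f - t * ξ (a • h')
        ≤ (ε / a) * |t * a| := this
      _ = ε * |t| := by rw [abs_mul, abs_of_pos ha0]; field_simp
  · rintro ⟨ξ, hYam⟩
    have hcont : ContinuousAt φ f := hφcont.continuousAt (hDopen.mem_nhds hf)
    have hU : {u | φ u < φ f + 1} ∈ nhds f :=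
      hcont (Iio_mem_nhds (by linarith : φ f < φ f + 1))
    have hU' : ({u | φ u < φ f + 1} ∩ D) ∈ nhds f :=
      Filter.inter_mem hU (hDopen.mem_nhds hf)
    have htrans : {w : C(X, ℝ) | f + w ∈ {u | φ u < φ f + 1} ∩ D} ∈ nhds (0 : C(X, ℝ)) := by
      have hc : Continuous fun w : C(X, ℝ) => f + w := continuous_const.add continuous_id
      have h2 : Filter.Tendsto (fun w : C(X, ℝ) => f + w) (nhds 0) (nhds f) := by
        have := hc.tendsto (0 : C(X, ℝ))
        rwa [add_zero] at this
      exact h2 hU'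
    obtain ⟨⟨K₀, ε₀⟩, ⟨hK₀, hε₀⟩, hsub₀⟩ := ck_nhds_basis.mem_iff.mp htrans
    obtain ⟨K₁, hK₁, hξvan⟩ := xi_vanish ξ
    set K : Set X := K₀ ∪ K₁ with hK_def
    have hKcomp : IsCompact K := hK₀.union hK₁
    set c : ℝ := ε₀ / 2 with hc_def
    have hc : 0 < c := by positivity
    refine ⟨ξ, {g : C(X, ℝ) | ∀ x ∈ K, |g x| < c},
      ck_nhds_basis.mem_of_mem (⟨hKcomp, hc⟩ : IsCompact (K, c).1 ∧ 0 < (K, c).2),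
      fun ε hε => ?_⟩
    obtain ⟨δ₀, hδ₀, hδ⟩ := hYam _ (ball_isVonNBounded (X := X) hc) ε hε
    refine ⟨min δ₀ 1, lt_min hδ₀ one_pos, fun t ht h hh => ?_⟩
    have ht0 : |t| < δ₀ := lt_of_lt_of_le ht (min_le_left _ _)
    have ht1 : |t| < 1 := lt_of_lt_of_le ht (min_le_right _ _)
    set h₁ : C(X, ℝ) := ⟨fun x => max (-c) (min c (h x)),
      (continuous_const.max (continuous_const.min h.continuous))⟩ with hh₁
    set h₂ : C(X, ℝ) := h - h₁ with hh₂
    have hb : ∀ x, |h₁ x| ≤ c := by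
      intro x
      rw [abs_le]
      constructor
      · exact le_max_left _ _
      · exact max_le (by linarith) (min_le_left _ _)
    have heq : ∀ x ∈ K, h₂ x = 0 := by
      intro x hx
      have hx' : |h x| < c := hh x hx
      have h1 : h₁ x = h x := by
        have := abs_lt.mp hx'
        show max (-c) (min c (h x)) = h x
        rw [min_eq_right this.2.le, max_eq_right this.1.le]
      show h x - h₁ x = 0
      rw [h1]; ring
    have hξ2 : ξ h₂ = 0 := hξvan h₂ fun x hx => heq x (Or.inr hx)
    have hsplit : h = h₁ + h₂ := by rw [hh₂]; abel
    -- domain facts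
    have hdom : ∀ s : ℝ, f + t • h₁ + s • (t • h₂) ∈ {u | φ u < φ f + 1} ∩ D := by
      intro s
      have : f + t • h₁ + s • (t • h₂) = f + (t • h₁ + s • (t • h₂)) := by
        rw [add_assoc]
      rw [this]
      refine hsub₀ fun x hx => ?_
      have hz : h₂ x = 0 := heq x (Or.inl hx)
      have hv : (t • h₁ + s • (t • h₂)) x = t * h₁ x := by
        simp [hz]
      rw [hv, abs_mul]
      calc |t| * |h₁ x| ≤ |t| * c := mul_le_mul_of_nonneg_left (hb x) (abs_nonneg t)
        _ ≤ 1 * c := mul_le_mul_of_nonneg_right ht1.le hc.le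
        _ < ε₀ := by rw [one_mul, hc_def]; linarith
    -- convexity of g
    set g : ℝ → ℝ := fun s => φ (f + t • h₁ + s • (t • h₂)) with hg_def
    have hgconv : ∀ s₁ s₂ a b : ℝ, 0 ≤ a → 0 ≤ b → a + b = 1 →
        g (a * s₁ + b * s₂) ≤ a * g s₁ + b * g s₂ := by
      intro s₁ s₂ a b ha hb' hab
      have hcomb : f + t • h₁ + (a * s₁ + b * s₂) • (t • h₂)
          = a • (f + t • h₁ + s₁ • (t • h₂)) + b • (f + t • h₁ + s₂ • (t • h₂)) := by
        obtain rfl : b = 1 - a := by linarith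
        module
      show φ _ ≤ a * φ _ + b * φ _
      rw [hcomb]
      exact hφconv.2 (hdom s₁).2 (hdom s₂).2 ha hb' hab
    have hgbound : ∀ s, g s ≤ φ f + 1 := fun s => (hdom s).1.le
    have hgeq : g 1 = g 0 := convex_line_const hgconv hgbound
    have hφeq : φ (f + t • h) = φ (f + t • h₁) := by
      have h1 := hgeq
      simp only [hg_def, one_smul, zero_smul, add_zero] at h1
      have h2 : f + t • h = f + t • h₁ + t • h₂ := by rw [hsplit]; module
      rw [h2, h1]
    have hξeq : ξ h = ξ h₁ := by
      rw [hsplit, map_add, hξ2, add_zero]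
    rw [hφeq, hξeq]
    exact hδ t ht0 h₁ hb
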